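/- Let T be a spanning arborescence converging to root r in a directed graph, and define the depth d(v) of a vertex v as the length of its T-path to r. If (p, q) ∈ T, then d(p) = d(q) + 1. Consequently, for any two distinct edges (p₁, q₁), (p₂, q₂) ∈ T with d(q₁) ≥ d(q₂), replacing (p₁, q₁) by any graph edge (p₁, p₂) with p₂ ≠ p₁ not in the T-subtree rooted at p₁ yields another spanning arborescence converging to r. -/
import Mathlib


/-- Rooted spanning arborescence converging to `r`: every non-root vertex has
its unique outgoing edge `(v, f v)` in the graph, and every vertex reaches the
root by iterating the parent map. -/
def IsArbR {V : Type*} (G : V → V → Prop) (r : V) (f : V → V) : Prop :=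
  (∀ v, v ≠ r → G v (f v)) ∧ ∀ v, ∃ n : ℕ, f^[n] v = r

/-- The depth of `v`: the length of the path from `v` to the root `r` in the
arborescence given by the parent map `f`. -/
noncomputable def depthTo {V : Type*} (f : V → V) (r v : V) : ℕ :=
  sInf {n : ℕ | f^[n] v = r}

/-- (a) Along an arborescence edge `(p, f p)` the depth drops by exactly one:
`d(p) = d(f p) + 1`.  (b) Edge-swap validity: for distinct arborescence edges
`(p₁, q₁)` and `(p₂, q₂)` with `d(q₁) ≥ d(q₂)`, replacing `(p₁, q₁)` by any
graph edge `(p₁, p₂)` with `p₂ ≠ p₁` not in the subtree rooted at `p₁` yields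
again a spanning arborescence converging to `r`. -/
theorem stmt17 {V : Type*} [DecidableEq V] (G : V → V → Prop) (r : V)
    (f : V → V) (hf : IsArbR G r f) :
    (∀ p, p ≠ r → depthTo f r p = depthTo f r (f p) + 1) ∧
    (∀ p₁ p₂ : V, p₁ ≠ r → p₂ ≠ r → (p₁, f p₁) ≠ (p₂, f p₂) →
      depthTo f r (f p₁) ≥ depthTo f r (f p₂) →
      G p₁ p₂ → p₂ ≠ p₁ → (¬ ∃ n : ℕ, f^[n] p₂ = p₁) →
      IsArbR G r (Function.update f p₁ p₂)) := by
  obtain ⟨hG, hreach⟩ := hf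
  have hmem : ∀ v, f^[depthTo f r v] v = r := fun v => Nat.sInf_mem (hreach v)
  have hdepth : ∀ p, p ≠ r → depthTo f r p = depthTo f r (f p) + 1 := by
    intro p hp
    apply le_antisymm
    · apply Nat.sInf_le
      show f^[depthTo f r (f p) + 1] p = r
      rw [Function.iterate_succ_apply]
      exact hmem (f p)
    · have h1 : f^[depthTo f r p] p = r := hmem p
      have h0 : depthTo f r p ≠ 0 := by
        intro h; rw [h] at h1; exact hp h1
      obtain ⟨m, hm⟩ := Nat.exists_eq_succ_of_ne_zero h0
      rw [hm] at h1 ⊢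
      rw [Function.iterate_succ_apply] at h1
      exact Nat.succ_le_succ (Nat.sInf_le h1)
  refine ⟨hdepth, ?_⟩
  intro p₁ p₂ hp₁ hp₂ hne hdep hGe hne' hnsub
  set g := Function.update f p₁ p₂ with hg
  have hgne : ∀ v, v ≠ p₁ → g v = f v := fun v h => Function.update_of_ne h _ _
  have hgp : g p₁ = p₂ := Function.update_self _ _ _
  constructor
  · intro v hv
    by_cases h : v = p₁
    · subst h; rw [hgp]; exact hGe
    · rw [hgne v h]; exact hG v hv
  · have hA : ∀ n, g^[n] p₂ = f^[n] p₂ := by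
      intro n
      induction n with
      | zero => rfl
      | succ k ih =>
        rw [Function.iterate_succ_apply', Function.iterate_succ_apply', ih,
          hgne _ (fun h => hnsub ⟨k, h⟩)]
    have hp2 : ∃ n, g^[n] p₂ = r := by
      obtain ⟨n, hn⟩ := hreach p₂
      exact ⟨n, (hA n).trans hn⟩
    have key : ∀ N v, depthTo f r v ≤ N → ∃ n, g^[n] v = r := by
      intro N
      induction N with
      | zero =>
        intro v hv
        have h0 : f^[0] v = r := by
          have := hmem v; rwa [Nat.le_zero.mp hv] at this
        exact ⟨0, h0⟩
      | succ N ih =>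
        intro v hv
        by_cases hvr : v = r
        · exact ⟨0, hvr⟩
        by_cases hvp : v = p₁
        · subst hvp
          obtain ⟨n, hn⟩ := hp2
          exact ⟨n + 1, by rw [Function.iterate_succ_apply, hgp]; exact hn⟩
        · have hd : depthTo f r (f v) ≤ N := by
            have := hdepth v hvr; omega
          obtain ⟨n, hn⟩ := ih (f v) hd
          exact ⟨n + 1, by rw [Function.iterate_succ_apply, hgne v hvp]; exact hn⟩
    exact fun v => key (depthTo f r v) v le_rfl
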